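/- Let A be a based ring and M a based module over A with finite basis {m_i}_{i∈I}. If M is indecomposable as a Z_+-module over A, then M is irreducible as a Z_+-module over A. -/

import Mathlib

open scoped BigOperators

/-- A ℤ₊-module over a ring A with fixed ℤ-basis b. -/
structure ZPlusModule {A : Type} [Ring A] {ι : Type} (b : Module.Basis ι ℤ A) where
  carrier : Type
  [acg : AddCommGroup carrier]
  [mod : Module A carrier]
  κ : Type
  basis : Module.Basis κ ℤ carrier
  nonneg : ∀ (i : ι) (j k : κ), 0 ≤ basis.repr (b i • basis j) k

attribute [instance] ZPlusModule.acg ZPlusModule.mod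

namespace ZPlusModule

variable {A : Type} [Ring A] {ι : Type} {b : Module.Basis ι ℤ A}

/-- M is decomposable if it is equivalent (via a bijection of bases inducing an A-module
isomorphism) to a direct sum of two nonzero ℤ₊-modules. -/
def Decomposable (M : ZPlusModule b) : Prop :=
  ∃ (N₁ N₂ : ZPlusModule b), Nonempty N₁.κ ∧ Nonempty N₂.κ ∧
    ∃ (e : M.κ ≃ (N₁.κ ⊕ N₂.κ)) (f : M.carrier ≃ₗ[A] (N₁.carrier × N₂.carrier)),
      ∀ j, f (M.basis j) =
        Sum.elim (fun a => (N₁.basis a, 0)) (fun a => ((0 : N₁.carrier), N₂.basis a)) (e j)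

/-- Irreducibility: the only ℤ₊-submodules (subsets of the basis whose ℤ-span is an
A-submodule) are 0 and M. -/
def Irred (M : ZPlusModule b) : Prop :=
  ∀ J : Set M.κ,
    (∀ (a : A) (x : M.carrier), x ∈ Submodule.span ℤ (⇑M.basis '' J) →
      a • x ∈ Submodule.span ℤ (⇑M.basis '' J)) → J = ∅ ∨ J = Set.univ

end ZPlusModule

section Aux

variable {A : Type} [Ring A] {ι : Type} {b : Module.Basis ι ℤ A}
variable (M : ZPlusModule b) (J : Set M.κ)

/-- The set of basis vectors `J` spans an `A`-submodule. -/
def zpClosed : Prop :=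
  ∀ (a : A) (x : M.carrier), x ∈ Submodule.span ℤ (⇑M.basis '' J) →
    a • x ∈ Submodule.span ℤ (⇑M.basis '' J)

/-- The `A`-submodule whose underlying set is the ℤ-span of the basis vectors in `J`. -/
def zpSub (hJ : zpClosed M J) : Submodule A M.carrier where
  carrier := ↑(Submodule.span ℤ (⇑M.basis '' J))
  add_mem' := fun h1 h2 => Submodule.add_mem _ h1 h2
  zero_mem' := Submodule.zero_mem _
  smul_mem' := hJ

lemma zpSub_restrict (hJ : zpClosed M J) :
    (zpSub M J hJ).restrictScalars ℤ = Submodule.span ℤ (⇑M.basis '' J) := by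
  ext x; exact Iff.rfl

/-- Transfer between the two subtypes. -/
def zpToSpan (hJ : zpClosed M J) :
    ↥(zpSub M J hJ) ≃ₗ[ℤ] ↥(Submodule.span ℤ (⇑M.basis '' J)) where
  toFun x := ⟨x.val, x.2⟩
  invFun x := ⟨x.val, x.2⟩
  map_add' _ _ := rfl
  map_smul' _ _ := rfl
  left_inv _ := rfl
  right_inv _ := rfl

noncomputable def zpRepr (hJ : zpClosed M J) :
    ↥(zpSub M J hJ) ≃ₗ[ℤ] (↥J →₀ ℤ) :=
  (zpToSpan M J hJ) ≪≫ₗ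
  (M.basis.repr.ofSubmodules _ (Finsupp.supported ℤ ℤ J) (by
      rw [Submodule.map_span, ← Set.image_comp, Finsupp.supported_eq_span_single]
      congr 1
      ext f
      simp [Module.Basis.repr_self])) ≪≫ₗ
  Finsupp.supportedEquivFinsupp J

lemma zpRepr_apply (hJ : zpClosed M J) (x : ↥(zpSub M J hJ)) (k : ↥J) :
    zpRepr M J hJ x k = M.basis.repr x.val k.val := rfl

end Aux

section Aux2

variable {A : Type} [Ring A] {ι : Type} {b : Module.Basis ι ℤ A}
variable (M : ZPlusModule b) (J : Set M.κ)

lemma zpBasis_val (hJ : zpClosed M J) (j : ↥J) :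
    ((Module.Basis.ofRepr (zpRepr M J hJ)) j).val = M.basis j.val := by
  classical
  have hy : (M.basis j.val) ∈ zpSub M J hJ :=
    Submodule.subset_span ⟨j.val, j.2, rfl⟩
  have h1 : zpRepr M J hJ ⟨M.basis j.val, hy⟩ = Finsupp.single j 1 := by
    ext k
    rw [zpRepr_apply, Module.Basis.repr_self]
    rw [Finsupp.single_apply, Finsupp.single_apply]
    by_cases h : j = k
    · subst h; simp
    · rw [if_neg h, if_neg]
      exact fun hk => h (Subtype.ext hk)
  have hb : (Module.Basis.ofRepr (zpRepr M J hJ)) j = ⟨M.basis j.val, hy⟩ := by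
    apply (zpRepr M J hJ).injective
    rw [h1]
    exact (Module.Basis.ofRepr (zpRepr M J hJ)).repr_self j
  rw [hb]

/-- The sub-ℤ₊-module spanned by basis vectors in `J`. -/
noncomputable def zpSubModule (hJ : zpClosed M J) : ZPlusModule b where
  carrier := ↥(zpSub M J hJ)
  κ := ↥J
  basis := Module.Basis.ofRepr (zpRepr M J hJ)
  nonneg := by
    intro i j k
    show 0 ≤ zpRepr M J hJ (b i • (Module.Basis.ofRepr (zpRepr M J hJ)) j) k
    rw [zpRepr_apply]
    have h2 : ((b i • (Module.Basis.ofRepr (zpRepr M J hJ)) j).val : M.carrier)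
        = b i • M.basis j.val := by
      show b i • ((Module.Basis.ofRepr (zpRepr M J hJ)) j).val = _
      rw [zpBasis_val]
    rw [h2]
    exact M.nonneg i j.val k.val

lemma zpSubModule_basis_val (hJ : zpClosed M J) (j : ↥J) :
    Subtype.val ((zpSubModule M J hJ).basis j) = M.basis j.val :=
  zpBasis_val M J hJ j

end Aux2


/-- Lemma 1: a based module with finite basis over a based ring which is
indecomposable as a ℤ₊-module is irreducible as a ℤ₊-module.
The based-ring structure on A consists of: nonnegative structure constants; a subset I₀
with 1 = Σ_{i ∈ I₀} bᵢ; an involution i ↦ ī inducing an anti-involution cj of A; and the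
trace condition τ(bᵢ bⱼ) = δ_{j, ī} where τ(x) = Σ_{i ∈ I₀} (coefficient of bᵢ in x).
The based-module condition is d_{ij}^k = d_{ī k}^j. -/
theorem based_module_indecomposable_implies_irreducible
    {A : Type} [Ring A] {ι : Type} [Fintype ι] [DecidableEq ι] (b : Module.Basis ι ℤ A)
    (hring : ∀ i j k, 0 ≤ b.repr (b i * b j) k)
    (I₀ : Finset ι) (hone : (1 : A) = ∑ i ∈ I₀, b i)
    (bar : ι → ι) (hbar : Function.Involutive bar)
    (cj : A →ₗ[ℤ] A)
    (hcj_basis : ∀ i, cj (b i) = b (bar i))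
    (hcj_mul : ∀ x y, cj (x * y) = cj y * cj x)
    (htau : ∀ i j, (∑ i₀ ∈ I₀, b.repr (b i * b j) i₀) = if j = bar i then 1 else 0)
    (M : ZPlusModule b) [Fintype M.κ]
    (hbased : ∀ (i : ι) (j k : M.κ),
      M.basis.repr (b i • M.basis j) k = M.basis.repr (b (bar i) • M.basis k) j)
    (hindec : ¬ M.Decomposable) :
    M.Irred := by
  classical
  intro J hJ
  by_contra hcon
  push_neg at hcon
  obtain ⟨hne, hnuniv⟩ := hcon
  -- key vanishing: for k ∉ J, j ∈ J, the structure constant d_{ik}^j vanishes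
  have key : ∀ (i : ι) (k : M.κ), k ∉ J → ∀ j ∈ J,
      M.basis.repr (b i • M.basis k) j = 0 := by
    intro i k hk j hj
    rw [hbased i k j]
    have hmem : b (bar i) • M.basis j ∈ Submodule.span ℤ (⇑M.basis '' J) :=
      hJ _ _ (Submodule.subset_span ⟨j, hj, rfl⟩)
    have hsupp := (Module.Basis.mem_span_image (b := M.basis)).1 hmem
    by_contra h0
    exact hk (hsupp (Finsupp.mem_support_iff.2 h0))
  -- the complement is also closed under the A-action
  have hJc : zpClosed M Jᶜ := by
    intro a x hx
    let f : M.carrier →ₗ[ℤ] M.carrier :=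
      (DistribMulAction.toAddMonoidHom M.carrier a).toIntLinearMap
    have hle : Submodule.span ℤ (⇑M.basis '' Jᶜ) ≤
        (Submodule.span ℤ (⇑M.basis '' Jᶜ)).comap f := by
      rw [Submodule.span_le]
      rintro y ⟨k, hk, rfl⟩
      show a • M.basis k ∈ Submodule.span ℤ (⇑M.basis '' Jᶜ)
      have ha : a • M.basis k = ∑ i, b.repr a i • (b i • M.basis k) := by
        conv_lhs => rw [← b.sum_repr a]
        rw [Finset.sum_smul]
        exact Finset.sum_congr rfl fun i _ => smul_assoc _ _ _
      rw [ha]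
      refine Submodule.sum_mem _ fun i _ => Submodule.smul_mem _ _ ?_
      rw [Module.Basis.mem_span_image]
      intro j hjs
      exact fun hjJ => (Finsupp.mem_support_iff.1 (Finset.mem_coe.1 hjs)) (key i k hk j hjJ)
    exact hle hx
  have hJclosed : zpClosed M J := hJ
  apply hindec
  refine ⟨zpSubModule M J hJclosed, zpSubModule M Jᶜ hJc, ?_, ?_, ?_⟩
  · obtain ⟨x, hx⟩ := hne
    exact ⟨⟨x, hx⟩⟩
  · obtain ⟨x, hx⟩ := Set.nonempty_compl.2 hnuniv
    exact ⟨⟨x, hx⟩⟩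
  · let g : ↥(zpSub M J hJclosed) × ↥(zpSub M Jᶜ hJc) →ₗ[A] M.carrier :=
      LinearMap.coprod (zpSub M J hJclosed).subtype (zpSub M Jᶜ hJc).subtype
    have hginj : Function.Injective g := by
      rw [← LinearMap.ker_eq_bot, LinearMap.ker_eq_bot']
      rintro ⟨x, y⟩ hxy
      simp only [g, LinearMap.coprod_apply, Submodule.coe_subtype] at hxy
      have hx2 : (x : M.carrier) = -(y : M.carrier) := eq_neg_of_add_eq_zero_left hxy
      have hxc : (x : M.carrier) ∈ Submodule.span ℤ (⇑M.basis '' Jᶜ) := by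
        rw [hx2]; exact Submodule.neg_mem _ y.2
      have h1 := (Module.Basis.mem_span_image (b := M.basis)).1 x.2
      have h2 := (Module.Basis.mem_span_image (b := M.basis)).1 hxc
      have hsupp : (M.basis.repr (x : M.carrier)).support = ∅ := by
        ext j
        simp only [Finset.notMem_empty, iff_false]
        intro hjs
        exact (h2 hjs) (h1 hjs)
      have hx0 : (x : M.carrier) = 0 := by
        have h3 : M.basis.repr (x : M.carrier) = 0 := Finsupp.support_eq_empty.1 hsupp
        exact (LinearEquiv.map_eq_zero_iff _).1 h3
      have hy0 : (y : M.carrier) = 0 := by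
        rw [hx0] at hxy; simpa using hxy
      exact Prod.ext (Subtype.ext hx0) (Subtype.ext hy0)
    have hgsurj : Function.Surjective g := by
      intro x
      have htop : (⊤ : Submodule ℤ M.carrier) ≤ (LinearMap.range g).restrictScalars ℤ := by
        rw [← M.basis.span_eq, Submodule.span_le]
        rintro y ⟨k, -, rfl⟩
        by_cases hk : k ∈ J
        · exact ⟨(⟨⟨M.basis k, Submodule.subset_span ⟨k, hk, rfl⟩⟩, 0⟩), by
            simp [g, LinearMap.coprod_apply]⟩
        · exact ⟨(⟨0, ⟨M.basis k, Submodule.subset_span ⟨k, hk, rfl⟩⟩⟩), by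
            simp [g, LinearMap.coprod_apply]⟩
      exact htop trivial
    let geq := LinearEquiv.ofBijective g ⟨hginj, hgsurj⟩
    let e : M.κ ≃ ((zpSubModule M J hJclosed).κ ⊕ (zpSubModule M Jᶜ hJc).κ) :=
      { toFun := fun k => if h : k ∈ J then Sum.inl ⟨k, h⟩ else Sum.inr ⟨k, h⟩
        invFun := Sum.elim Subtype.val Subtype.val
        left_inv := fun k => by by_cases h : k ∈ J <;> simp [h] <;> rfl
        right_inv := fun s => by
          rcases s with a | a
          · exact dif_pos a.2
          · have := a.2
            simp only [Set.mem_compl_iff] at this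
            exact dif_neg this }
    refine ⟨e, geq.symm, ?_⟩
    intro j
    refine (LinearEquiv.symm_apply_eq (e := geq)).2 ?_
    by_cases hj : j ∈ J
    · have he : e j = Sum.inl ⟨j, hj⟩ := dif_pos hj
      rw [he]
      show M.basis j = g ((zpSubModule M J hJclosed).basis ⟨j, hj⟩, 0)
      show M.basis j = Subtype.val ((zpSubModule M J hJclosed).basis ⟨j, hj⟩)
          + Subtype.val (0 : ↥(zpSub M Jᶜ hJc))
      rw [zpSubModule_basis_val]
      simp
    · have he : e j = Sum.inr ⟨j, hj⟩ := dif_neg hj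
      rw [he]
      show M.basis j = g (0, (zpSubModule M Jᶜ hJc).basis ⟨j, hj⟩)
      show M.basis j = Subtype.val (0 : ↥(zpSub M J hJclosed))
          + Subtype.val ((zpSubModule M Jᶜ hJc).basis ⟨j, hj⟩)
      rw [zpSubModule_basis_val]
      simp
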